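/- Let k > 0 and R > 0, let S be the sphere of radius R centered at the origin in ℝ³ with surface measure σ, and let u ∈ L²(S, σ). If the function (Tu)(x) = ∫_S u(y)·exp(𝐢k‖x−y‖)/(4π‖x−y‖) dσ(y) vanishes on some nonempty open subset Ω of the open ball B(0,R) = {x ∈ ℝ³ : ‖x‖ < R}, then Tu vanishes on all of B(0,R). -/

import Mathlib

open MeasureTheory Metric Complex

noncomputable section

/-- The 2-dimensional surface measure on the sphere of radius `R` centered at the origin
in `ℝ³ = EuclideanSpace ℝ (Fin 3)`, realized as a measure on the ambient space supported on
the sphere: the pushforward of the canonical unit-sphere measure `volume.toSphere`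
under the scaling `y ↦ R • y`, rescaled by the factor `R ^ 2`. -/
def sphereSurfaceMeasure (R : ℝ) : Measure (EuclideanSpace ℝ (Fin 3)) :=
  ENNReal.ofReal (R ^ 2) •
    Measure.map (fun y => R • y)
      (Measure.map Subtype.val
        ((volume : Measure (EuclideanSpace ℝ (Fin 3))).toSphere))

/-- The complex conjugate of the Helmholtz Green's function,
`conj G(x,y) = exp(𝐢 k ‖x - y‖) / (4 π ‖x - y‖)`. -/
def conjG (k : ℝ) (x y : EuclideanSpace ℝ (Fin 3)) : ℂ :=
  Complex.exp (Complex.I * (k : ℂ) * (‖x - y‖ : ℂ)) / (4 * (Real.pi : ℂ) * (‖x - y‖ : ℂ))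

local notation "E3" => EuclideanSpace ℝ (Fin 3)





instance sphereSurfaceMeasure_finite (R : ℝ) : IsFiniteMeasure (sphereSurfaceMeasure R) := by
  constructor
  rw [sphereSurfaceMeasure, Measure.smul_apply, smul_eq_mul]
  refine ENNReal.mul_lt_top ENNReal.ofReal_lt_top ?_
  rw [Measure.map_apply (measurable_const_smul R) MeasurableSet.univ,
    Set.preimage_univ, Measure.map_apply measurable_subtype_coe MeasurableSet.univ,
    Set.preimage_univ]
  exact measure_lt_top _ _

lemma sphereSurfaceMeasure_ae_mem (R : ℝ) (hR : 0 < R) :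
    ∀ᵐ y ∂(sphereSurfaceMeasure R), y ∈ sphere (0 : E3) R := by
  rw [ae_iff]
  have hms : MeasurableSet {y : E3 | ¬ y ∈ sphere (0 : E3) R} :=
    (isClosed_sphere.measurableSet).compl
  rw [sphereSurfaceMeasure, Measure.smul_apply,
    Measure.map_apply (measurable_const_smul R) hms,
    Measure.map_apply measurable_subtype_coe (hms.preimage (measurable_const_smul R))]
  have he : (Subtype.val ⁻¹' ((fun y : E3 => R • y) ⁻¹' {y : E3 | ¬ y ∈ sphere (0 : E3) R})
      : Set (sphere (0 : E3) 1)) = ∅ := by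
    ext y
    simp only [Set.mem_preimage, Set.mem_setOf_eq, Set.mem_empty_iff_false, iff_false,
      not_not, mem_sphere_iff_norm, sub_zero]
    rw [norm_smul]
    have : ‖(y : E3)‖ = 1 := by simpa using y.2
    simp [this, abs_of_pos hR]
  rw [he, measure_empty, smul_zero]



def phiF (k : ℝ) (w : ℂ) : ℂ :=
  Complex.exp (Complex.I * k * w ^ (1/2 : ℂ)) / (4 * (Real.pi : ℂ) * w ^ (1/2 : ℂ))

def phiF' (k : ℝ) (w : ℂ) : ℂ :=
  (Complex.exp (Complex.I * k * w ^ (1/2 : ℂ)) * (Complex.I * k * ((1/2 : ℂ) * w ^ ((1/2 : ℂ) - 1)))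
      * (4 * (Real.pi : ℂ) * w ^ (1/2 : ℂ))
    - Complex.exp (Complex.I * k * w ^ (1/2 : ℂ))
      * (4 * (Real.pi : ℂ) * ((1/2 : ℂ) * w ^ ((1/2 : ℂ) - 1))))
    / (4 * (Real.pi : ℂ) * w ^ (1/2 : ℂ)) ^ 2

lemma den_ne_zero {w : ℂ} (hw : w ≠ 0) : (4 : ℂ) * (Real.pi : ℂ) * w ^ (1/2 : ℂ) ≠ 0 := by
  have hπ : (Real.pi : ℂ) ≠ 0 := Complex.ofReal_ne_zero.2 Real.pi_ne_zero
  have : w ^ (1/2 : ℂ) ≠ 0 := by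
    simp [Complex.cpow_eq_zero_iff, hw]
  exact mul_ne_zero (mul_ne_zero (by norm_num) hπ) this

lemma hasDerivAt_phiF (k : ℝ) {w : ℂ} (hw : 0 < w.re) :
    HasDerivAt (phiF k) (phiF' k w) w := by
  have hslit : w ∈ Complex.slitPlane := Or.inl hw
  have hw0 : w ≠ 0 := Complex.slitPlane_ne_zero hslit
  have hsq : HasDerivAt (fun z : ℂ => z ^ (1/2 : ℂ)) ((1/2 : ℂ) * w ^ ((1/2 : ℂ) - 1)) w :=
    (Complex.hasStrictDerivAt_cpow_const hslit).hasDerivAt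
  have hnum : HasDerivAt (fun z : ℂ => Complex.exp (Complex.I * k * z ^ (1/2 : ℂ)))
      (Complex.exp (Complex.I * k * w ^ (1/2 : ℂ))
        * (Complex.I * k * ((1/2 : ℂ) * w ^ ((1/2 : ℂ) - 1)))) w :=
    (hsq.const_mul (Complex.I * k)).cexp
  have hden : HasDerivAt (fun z : ℂ => 4 * (Real.pi : ℂ) * z ^ (1/2 : ℂ))
      (4 * (Real.pi : ℂ) * ((1/2 : ℂ) * w ^ ((1/2 : ℂ) - 1))) w :=
    hsq.const_mul _
  exact hnum.div hden (den_ne_zero hw0)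

lemma continuousAt_phiF (k : ℝ) {w : ℂ} (hw : 0 < w.re) : ContinuousAt (phiF k) w :=
  (hasDerivAt_phiF k hw).differentiableAt.continuousAt

lemma continuousOn_phiF (k : ℝ) : ContinuousOn (phiF k) {w : ℂ | 0 < w.re} := fun _ hw =>
  (continuousAt_phiF k hw).continuousWithinAt

lemma continuousAt_phiF' (k : ℝ) {w : ℂ} (hw : 0 < w.re) : ContinuousAt (phiF' k) w := by
  have hslit : w ∈ Complex.slitPlane := Or.inl hw
  have hw0 : w ≠ 0 := Complex.slitPlane_ne_zero hslit
  have hsq : ContinuousAt (fun z : ℂ => z ^ (1/2 : ℂ)) w :=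
    continuousAt_cpow_const hslit
  have hsq' : ContinuousAt (fun z : ℂ => z ^ ((1/2 : ℂ) - 1)) w :=
    continuousAt_cpow_const hslit
  have h1 : ContinuousAt (fun z : ℂ => Complex.exp (Complex.I * k * z ^ (1/2 : ℂ))) w :=
    Complex.continuous_exp.continuousAt.comp (continuousAt_const.mul hsq)
  apply ContinuousAt.div
  · exact (h1.mul (continuousAt_const.mul (continuousAt_const.mul hsq'))).mul
      (continuousAt_const.mul hsq) |>.sub
      (h1.mul (continuousAt_const.mul (continuousAt_const.mul hsq')))
  · exact (continuousAt_const.mul hsq).pow 2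
  · exact pow_ne_zero 2 (den_ne_zero hw0)

lemma continuousOn_phiF' (k : ℝ) : ContinuousOn (phiF' k) {w : ℂ | 0 < w.re} := fun _ hw =>
  (continuousAt_phiF' k hw).continuousWithinAt

lemma phiF_ofReal (k : ℝ) {r : ℝ} (hr : 0 < r) :
    phiF k (((r ^ 2 : ℝ) : ℂ)) =
      Complex.exp (Complex.I * k * r) / (4 * (Real.pi : ℂ) * r) := by
  have h2 : (((r ^ 2 : ℝ) : ℂ)) ^ (1/2 : ℂ) = (r : ℂ) := by
    rw [show ((1 : ℂ)/2) = (((1 : ℝ)/2 : ℝ) : ℂ) by norm_num,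
      ← Complex.ofReal_cpow (by positivity)]
    norm_cast
    rw [← Real.rpow_natCast r 2, ← Real.rpow_mul hr.le]
    norm_num
  rw [phiF]; rw [show ((1:ℂ)/2) = (2⁻¹ : ℂ) by norm_num] at h2; simp only [one_div]; rw [h2]

set_option maxHeartbeats 2000000 in
theorem T_vanishes_on_ball_of_vanishes_on_open
    (k R : ℝ) (hk : 0 < k) (hR : 0 < R)
    (u : EuclideanSpace ℝ (Fin 3) → ℂ)
    (hu : MemLp u 2 (sphereSurfaceMeasure R))
    (Ω : Set (EuclideanSpace ℝ (Fin 3))) (hΩ_open : IsOpen Ω) (hΩ_ne : Ω.Nonempty)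
    (hΩ_sub : Ω ⊆ ball (0 : EuclideanSpace ℝ (Fin 3)) R)
    (h : ∀ x ∈ Ω, ∫ y, u y * conjG k x y ∂(sphereSurfaceMeasure R) = 0) :
    ∀ x ∈ ball (0 : EuclideanSpace ℝ (Fin 3)) R,
      ∫ y, u y * conjG k x y ∂(sphereSurfaceMeasure R) = 0 := by
  intro x₁ hx₁
  obtain ⟨x₀, hx₀Ω⟩ := hΩ_ne
  have hx₀ : x₀ ∈ ball (0 : E3) R := hΩ_sub hx₀Ω
  by_cases hxx : x₁ = x₀
  · rw [hxx]; exact h x₀ hx₀Ω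
  set μ := sphereSurfaceMeasure R with hμdef
  have hae := sphereSurfaceMeasure_ae_mem R hR
  have hu_int : Integrable u μ := hu.integrable one_le_two
  set v : E3 := x₁ - x₀ with hv
  have hV : 0 < ‖v‖ := by
    rw [norm_pos_iff, hv, sub_ne_zero]; exact hxx
  set ρ := max ‖x₀‖ ‖x₁‖ with hρ
  have hρR : ρ < R := by
    rw [mem_ball, dist_zero_right] at hx₀ hx₁
    exact max_lt hx₀ hx₁
  set δ := R - ρ with hδdef
  have hδ : 0 < δ := sub_pos.2 hρR
  set ε := δ / (4 * (‖v‖ + 1)) with hε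
  have hεpos : 0 < ε := by positivity
  have hεV : ε * ‖v‖ ≤ δ / 4 := by
    rw [hε, div_mul_eq_mul_div, div_le_div_iff₀ (by positivity) (by norm_num)]
    nlinarith [hδ.le, hV.le]
  -- norm bound along (extended) segment
  have hseg : ∀ t : ℝ, -ε ≤ t → t ≤ 1 + ε → ‖x₀ + t • v‖ ≤ ρ + ε * ‖v‖ := by
    intro t ht1 ht2
    have hconv : ∀ s : ℝ, 0 ≤ s → s ≤ 1 → ‖x₀ + s • v‖ ≤ ρ := by
      intro s hs0 hs1
      have hx : x₀ + s • v = (1 - s) • x₀ + s • x₁ := by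
        rw [hv]; module
      rw [hx]
      calc ‖(1 - s) • x₀ + s • x₁‖ ≤ ‖(1 - s) • x₀‖ + ‖s • x₁‖ := norm_add_le _ _
        _ = (1 - s) * ‖x₀‖ + s * ‖x₁‖ := by
            rw [norm_smul, norm_smul, Real.norm_of_nonneg (by linarith),
              Real.norm_of_nonneg hs0]
        _ ≤ (1 - s) * ρ + s * ρ := by
            have h1 : ‖x₀‖ ≤ ρ := le_max_left _ _
            have h2 : ‖x₁‖ ≤ ρ := le_max_right _ _
            have h3 : (0:ℝ) ≤ 1 - s := by linarith
            nlinarith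
        _ = ρ := by ring
    rcases le_or_gt t 0 with h0 | h0
    · have habs : |t| ≤ ε := abs_le.2 ⟨ht1, by linarith⟩
      calc ‖x₀ + t • v‖ ≤ ‖x₀‖ + ‖t • v‖ := norm_add_le _ _
        _ = ‖x₀‖ + |t| * ‖v‖ := by rw [norm_smul, Real.norm_eq_abs]
        _ ≤ ρ + ε * ‖v‖ := by
            have := le_max_left ‖x₀‖ ‖x₁‖
            nlinarith [hV.le]
    rcases le_or_gt t 1 with h1 | h1
    · have := hconv t h0.le h1
      nlinarith [hεpos.le, hV.le]
    · have hx : x₀ + t • v = x₁ + (t - 1) • v := by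
        rw [hv]; module
      rw [hx]
      calc ‖x₁ + (t - 1) • v‖ ≤ ‖x₁‖ + ‖(t - 1) • v‖ := norm_add_le _ _
        _ = ‖x₁‖ + |t - 1| * ‖v‖ := by rw [norm_smul, Real.norm_eq_abs]
        _ ≤ ρ + ε * ‖v‖ := by
            have h2 : |t - 1| ≤ ε := abs_le.2 ⟨by linarith, by linarith⟩
            have := le_max_right ‖x₀‖ ‖x₁‖
            nlinarith [hV.le]
  have hdist : ∀ t : ℝ, -ε ≤ t → t ≤ 1 + ε → ∀ y ∈ sphere (0 : E3) R,
      3 / 4 * δ ≤ ‖x₀ + t • v - y‖ := by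
    intro t ht1 ht2 y hy
    have hyn : ‖y‖ = R := by simpa using hy
    have h2 := hseg t ht1 ht2
    have h3 : ‖y‖ - ‖x₀ + t • v‖ ≤ ‖x₀ + t • v - y‖ := by
      rw [norm_sub_rev]
      exact norm_sub_norm_le _ _
    rw [hyn] at h3
    linarith
  set B : E3 → ℝ := fun y => (inner ℝ (x₀ - y) v : ℝ) with hB
  set Q : ℂ → E3 → ℂ := fun z y =>
    ((‖x₀ - y‖ ^ 2 : ℝ) : ℂ) + 2 * z * ((B y : ℝ) : ℂ) + z ^ 2 * ((‖v‖ ^ 2 : ℝ) : ℂ) with hQ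
  have hQreal : ∀ (t : ℝ) (y : E3), Q (t : ℂ) y = ((‖x₀ + t • v - y‖ ^ 2 : ℝ) : ℂ) := by
    intro t y
    have hx : x₀ + t • v - y = (x₀ - y) + t • v := by module
    have hnorm : ‖x₀ + t • v - y‖ ^ 2 = ‖x₀ - y‖ ^ 2 + 2 * t * B y + t ^ 2 * ‖v‖ ^ 2 := by
      rw [hx, @norm_add_sq_real, real_inner_smul_right, norm_smul, Real.norm_eq_abs,
        mul_pow, _root_.sq_abs, hB]
      ring
    rw [hQ, hnorm]
    push_cast
    ring
  have hQre : ∀ (z : ℂ) (y : E3),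
      (Q z y).re = ‖x₀ + z.re • v - y‖ ^ 2 - z.im ^ 2 * ‖v‖ ^ 2 := by
    intro z y
    have h1 : (Q z y).re = ‖x₀ - y‖ ^ 2 + 2 * z.re * B y + (z.re ^ 2 - z.im ^ 2) * ‖v‖ ^ 2 := by
      simp only [hQ, Complex.add_re, Complex.mul_re, Complex.ofReal_re, Complex.ofReal_im,
        Complex.mul_im, Complex.re_ofNat, Complex.im_ofNat, pow_two]
      ring
    have h2 := congrArg Complex.re (hQreal z.re y)
    have h3 : (Q (z.re : ℂ) y).re
        = ‖x₀ - y‖ ^ 2 + 2 * z.re * B y + z.re ^ 2 * ‖v‖ ^ 2 := by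
      simp only [hQ, Complex.add_re, Complex.mul_re, Complex.ofReal_re, Complex.ofReal_im,
        Complex.re_ofNat, Complex.im_ofNat, pow_two]
      ring
    rw [h3] at h2
    simp only [Complex.ofReal_re] at h2
    rw [h1, ← h2]
    ring
  set U : Set ℂ := Set.Ioo (-ε) (1 + ε) ×ℂ Set.Ioo (-ε) ε with hU
  have hUopen : IsOpen U := isOpen_Ioo.reProdIm isOpen_Ioo
  have hUconv : Convex ℝ U := by
    have hhull : convexHull ℝ U = U := by
      rw [hU, Complex.convexHull_reProdIm, (convex_Ioo _ _).convexHull_eq,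
        (convex_Ioo _ _).convexHull_eq]
    rw [← hhull]
    exact convex_convexHull ℝ U
  have hQpos : ∀ z ∈ U, ∀ y ∈ sphere (0 : E3) R, 0 < (Q z y).re := by
    intro z hz y hy
    rw [Complex.mem_reProdIm] at hz
    obtain ⟨⟨hz1, hz2⟩, hz3, hz4⟩ := hz
    rw [hQre]
    have hd := hdist z.re hz1.le hz2.le y hy
    have him : |z.im| ≤ ε := abs_le.2 ⟨hz3.le, hz4.le⟩
    have e1 : |z.im| * ‖v‖ ≤ ε * ‖v‖ := by nlinarith [hV.le, abs_nonneg z.im]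
    have e2 : |z.im| * ‖v‖ ≤ δ / 4 := e1.trans hεV
    have e3 : z.im ^ 2 * ‖v‖ ^ 2 ≤ (δ / 4) ^ 2 := by
      have : (|z.im| * ‖v‖) ^ 2 ≤ (δ / 4) ^ 2 := by
        apply pow_le_pow_left₀ (by positivity) e2
      calc z.im ^ 2 * ‖v‖ ^ 2 = (|z.im| * ‖v‖) ^ 2 := by rw [mul_pow, _root_.sq_abs]
        _ ≤ (δ / 4) ^ 2 := this
    have e4 : (3 / 4 * δ) ^ 2 ≤ ‖x₀ + z.re • v - y‖ ^ 2 :=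
      pow_le_pow_left₀ (by positivity) hd 2
    have e5 : (0:ℝ) < (3 / 4 * δ) ^ 2 - (δ / 4) ^ 2 := by nlinarith [hδ]
    linarith [e3, e4, e5]
  have h0U : (0 : ℂ) ∈ U := by
    rw [hU, Complex.mem_reProdIm]
    simp only [Complex.zero_re, Complex.zero_im, Set.mem_Ioo]
    constructor <;> constructor <;> linarith
  have h1U : (1 : ℂ) ∈ U := by
    rw [hU, Complex.mem_reProdIm]
    simp only [Complex.one_re, Complex.one_im, Set.mem_Ioo]
    constructor <;> constructor <;> linarith
  set lin : ℂ → E3 → ℂ := fun z y => 2 * ((B y : ℝ) : ℂ) + 2 * z * ((‖v‖ ^ 2 : ℝ) : ℂ) with hlin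
  set Fz : ℂ → E3 → ℂ := fun z y => u y * phiF k (Q z y) with hFz
  set F'z : ℂ → E3 → ℂ := fun z y => u y * (phiF' k (Q z y) * lin z y) with hF'z
  set Hf : ℂ → ℂ := fun z => ∫ y, Fz z y ∂μ with hHf
  have hμrestrict : μ.restrict (sphere (0 : E3) R) = μ :=
    Measure.restrict_eq_self_of_ae_mem hae
  have hQcont : Continuous (fun p : ℂ × E3 => Q p.1 p.2) := by
    rw [hQ]
    apply Continuous.add
    apply Continuous.add
    · exact Complex.continuous_ofReal.comp ((continuous_const.sub continuous_snd).norm.pow 2)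
    · exact (continuous_const.mul continuous_fst).mul
        (Complex.continuous_ofReal.comp
          (((continuous_const.sub continuous_snd).inner continuous_const)))
    · exact (continuous_fst.pow 2).mul continuous_const
  have hlincont : Continuous (fun p : ℂ × E3 => lin p.1 p.2) := by
    rw [hlin]
    apply Continuous.add
    · exact continuous_const.mul (Complex.continuous_ofReal.comp
        (((continuous_const.sub continuous_snd).inner continuous_const)))
    · exact (continuous_const.mul continuous_fst).mul continuous_const
  have hAESM : ∀ z ∈ U, AEStronglyMeasurable (Fz z) μ := by
    intro z hz
    apply hu.aestronglyMeasurable.mul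
    have hc : ContinuousOn (fun y => phiF k (Q z y)) (sphere (0 : E3) R) := by
      intro y hy
      exact ((continuousAt_phiF k (hQpos z hz y hy)).comp
        ((hQcont.comp (Continuous.prodMk_right z)).continuousAt)).continuousWithinAt
    rw [← hμrestrict]
    exact hc.aestronglyMeasurable isClosed_sphere.measurableSet
  have hAESM' : ∀ z ∈ U, AEStronglyMeasurable (F'z z) μ := by
    intro z hz
    apply hu.aestronglyMeasurable.mul
    have hc : ContinuousOn (fun y => phiF' k (Q z y) * lin z y) (sphere (0 : E3) R) := by
      intro y hy
      refine ContinuousWithinAt.mul ?_ ?_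
      · exact ((continuousAt_phiF' k (hQpos z hz y hy)).comp
          ((hQcont.comp (Continuous.prodMk_right z)).continuousAt)).continuousWithinAt
      · exact ((hlincont.comp (Continuous.prodMk_right z)).continuousAt).continuousWithinAt
    rw [← hμrestrict]
    exact hc.aestronglyMeasurable isClosed_sphere.measurableSet
  have hQderiv : ∀ (y : E3) (z : ℂ), HasDerivAt (fun z => Q z y) (lin z y) z := by
    intro y z
    have h1 : HasDerivAt (fun z : ℂ => 2 * z * ((B y : ℝ) : ℂ)) (2 * ((B y : ℝ) : ℂ)) z := by
      simpa only [mul_one, id_eq] using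
        ((hasDerivAt_id z).const_mul (2 : ℂ)).mul_const ((B y : ℝ) : ℂ)
    have h2 : HasDerivAt (fun z : ℂ => z ^ 2 * ((‖v‖ ^ 2 : ℝ) : ℂ))
        (2 * z * ((‖v‖ ^ 2 : ℝ) : ℂ)) z := by
      simpa only [Nat.cast_ofNat, Nat.reduceSub, pow_one] using
        (hasDerivAt_pow 2 z).mul_const ((‖v‖ ^ 2 : ℝ) : ℂ)
    show HasDerivAt (fun z : ℂ => ((‖x₀ - y‖ ^ 2 : ℝ) : ℂ) + 2 * z * ((B y : ℝ) : ℂ)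
        + z ^ 2 * ((‖v‖ ^ 2 : ℝ) : ℂ)) (2 * ((B y : ℝ) : ℂ) + 2 * z * ((‖v‖ ^ 2 : ℝ) : ℂ)) z
    have h3 := ((hasDerivAt_const z ((‖x₀ - y‖ ^ 2 : ℝ) : ℂ)).add h1).add h2
    rw [zero_add] at h3
    exact h3
  have hHdiff : DifferentiableOn ℂ Hf U := by
    intro z₀ hz₀
    obtain ⟨r, hrpos, hrsub⟩ : ∃ r > 0, closedBall z₀ r ⊆ U := by
      rcases Metric.nhds_basis_closedBall.mem_iff.1 (hUopen.mem_nhds hz₀) with ⟨r, hr, hsub⟩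
      exact ⟨r, hr, hsub⟩
    set K : Set (ℂ × E3) := closedBall z₀ r ×ˢ sphere (0 : E3) R with hK
    have hKcomp : IsCompact K := (isCompact_closedBall _ _).prod (isCompact_sphere _ _)
    have hKmem : ∀ p ∈ K, 0 < (Q p.1 p.2).re := fun p hp => hQpos p.1 (hrsub hp.1) p.2 hp.2
    obtain ⟨C, hC⟩ := hKcomp.exists_bound_of_continuousOn
      ((continuousOn_phiF k).comp hQcont.continuousOn (fun p hp => hKmem p hp))
    obtain ⟨C', hC'⟩ := hKcomp.exists_bound_of_continuousOn
      (ContinuousOn.mul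
        ((continuousOn_phiF' k).comp hQcont.continuousOn (fun p hp => hKmem p hp))
        hlincont.continuousOn)
    have hz₀K : z₀ ∈ closedBall z₀ r := mem_closedBall_self hrpos.le
    have main := hasDerivAt_integral_of_dominated_loc_of_deriv_le (F := Fz) (F' := F'z)
      (μ := μ) (bound := fun y => ‖u y‖ * C') (Metric.ball_mem_nhds z₀ hrpos)
      (Filter.eventually_of_mem (Metric.ball_mem_nhds z₀ hrpos)
        (fun z hz => hAESM z (hrsub (ball_subset_closedBall hz))))
      ?_ (hAESM' z₀ (hrsub hz₀K)) ?_ (hu_int.norm.mul_const C') ?_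
    · exact main.2.differentiableAt.differentiableWithinAt
    · -- integrability of Fz z₀
      apply Integrable.mono' (hu_int.norm.mul_const C) (hAESM z₀ (hrsub hz₀K))
      filter_upwards [hae] with y hy
      have hb := hC (z₀, y) ⟨hz₀K, hy⟩
      simp only [Function.comp_apply] at hb
      show ‖u y * phiF k (Q z₀ y)‖ ≤ ‖u y‖ * C
      rw [norm_mul]
      exact mul_le_mul_of_nonneg_left hb (norm_nonneg _)
    · -- bound on F'z
      filter_upwards [hae] with y hy
      intro z hz
      have hb := hC' (z, y) ⟨ball_subset_closedBall hz, hy⟩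
      show ‖u y * (phiF' k (Q z y) * lin z y)‖ ≤ ‖u y‖ * C'
      rw [norm_mul]
      exact mul_le_mul_of_nonneg_left hb (norm_nonneg _)
    · -- differentiability
      filter_upwards [hae] with y hy
      intro z hz
      have hz' : z ∈ U := hrsub (ball_subset_closedBall hz)
      have h1 := hQderiv y z
      have h2 := hasDerivAt_phiF k (hQpos z hz' y hy)
      have h3 := (h2.comp z h1).const_mul (u y)
      show HasDerivAt (fun z => u y * phiF k (Q z y))
        (u y * (phiF' k (Q z y) * lin z y)) z
      exact h3
  have hHanalytic : AnalyticOnNhd ℂ Hf U := hHdiff.analyticOnNhd hUopen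
  have hHeq : ∀ t : ℝ, -ε ≤ t → t ≤ 1 + ε →
      Hf (t : ℂ) = ∫ y, u y * conjG k (x₀ + t • v) y ∂μ := by
    intro t ht1 ht2
    apply integral_congr_ae
    filter_upwards [hae] with y hy
    have hd := hdist t ht1 ht2 y hy
    have hrpos : 0 < ‖x₀ + t • v - y‖ := lt_of_lt_of_le (by linarith) hd
    show u y * phiF k (Q (t : ℂ) y) = u y * conjG k (x₀ + t • v) y
    congr 1
    rw [hQreal t y, phiF_ofReal k hrpos]
    simp only [conjG]
  obtain ⟨r₀, hr₀pos, hr₀sub⟩ : ∃ r₀ > 0, ball x₀ r₀ ⊆ Ω :=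
    Metric.isOpen_iff.1 hΩ_open x₀ hx₀Ω
  set τ := min ε (r₀ / (‖v‖ + 1)) with hτ
  have hτpos : 0 < τ := lt_min hεpos (by positivity)
  have hzero_t : ∀ t : ℝ, 0 < t → t < τ → Hf (t : ℂ) = 0 := by
    intro t h1 h2
    have htε : t < ε := lt_of_lt_of_le h2 (min_le_left _ _)
    have htr : t < r₀ / (‖v‖ + 1) := lt_of_lt_of_le h2 (min_le_right _ _)
    have hmem : x₀ + t • v ∈ Ω := by
      apply hr₀sub
      rw [mem_ball, dist_eq_norm]
      have : x₀ + t • v - x₀ = t • v := by module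
      rw [this, norm_smul, Real.norm_eq_abs, abs_of_pos h1]
      have := (lt_div_iff₀ (show (0:ℝ) < ‖v‖ + 1 by positivity)).1 htr
      nlinarith [hV.le]
    rw [hHeq t (by linarith) (by linarith)]
    exact h _ hmem
  have hfreq : ∃ᶠ z in nhdsWithin (0 : ℂ) {(0 : ℂ)}ᶜ, Hf z = 0 := by
    have htend : Filter.Tendsto (fun n : ℕ => ((τ / 2 / (n + 1) : ℝ) : ℂ))
        Filter.atTop (nhdsWithin (0 : ℂ) {(0 : ℂ)}ᶜ) := by
      rw [tendsto_nhdsWithin_iff]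
      constructor
      · have h1 : Filter.Tendsto (fun n : ℕ => (τ / 2 / (n + 1) : ℝ)) Filter.atTop (nhds 0) := by
          apply Filter.Tendsto.div_atTop (tendsto_const_nhds)
          exact Filter.tendsto_atTop_add_const_right _ 1 tendsto_natCast_atTop_atTop
        have h2 := (Complex.continuous_ofReal.tendsto 0).comp h1
        simpa only [Function.comp_def, Complex.ofReal_zero] using h2
      · apply Filter.Eventually.of_forall
        intro n
        simp only [Set.mem_compl_iff, Set.mem_singleton_iff]
        have : (0:ℝ) < τ / 2 / (n + 1) := by positivity
        exact Complex.ofReal_ne_zero.2 (ne_of_gt this)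
    apply htend.frequently
    apply Filter.Frequently.of_forall
    intro n
    apply hzero_t _ (by positivity)
    have h1 : τ / 2 / (n + 1) ≤ τ / 2 := by
      apply div_le_self (by positivity)
      have : (0:ℝ) ≤ (n:ℝ) := Nat.cast_nonneg n
      linarith
    linarith
  have hHzero := hHanalytic.eqOn_zero_of_preconnected_of_frequently_eq_zero
    hUconv.isPreconnected h0U hfreq
  have hH1 : Hf 1 = 0 := hHzero h1U
  have h2 := hHeq 1 (by linarith) (by linarith)
  have hx : x₀ + (1 : ℝ) • v = x₁ := by rw [hv]; module
  rw [hx] at h2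
  rw [← h2]
  rwa [Complex.ofReal_one]
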